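/- Let d ≥ 1, let W be a d×d real matrix that is strictly upper triangular (W i k = 0 whenever i ≥ k), let α, δ, κ ∈ ℝ^d, α₂, δ₂ ∈ ℝ, and fix j ∈ {1,…,d}. Let e_j be the j-th standard basis vector and Q_j = I − e_j e_jᵀ. Then: (i) the matrix I − Q_j Wᵀ is invertible; (ii) for every a, m ∈ ℝ, the vector z(a,m) := (m − (α + aδ)_j) · (I − Q_j Wᵀ)^{-1} e_j is the unique z ∈ ℝ^d satisfying e_jᵀ z = m − (α + aδ)_j and z_i = (Wᵀ z)_i for all i ≠ j; (iii) setting F(a) := α₂ + δ₂ a + κᵀ(α + aδ) and G(a,m) := α₂ + δ₂ a + κᵀ(α + aδ + z(a,m)), both a ↦ F(a) and a ↦ G(a,m) are affine functions of a, and the difference of their slopes equals the product δ_j · κᵀ(I − Q_j Wᵀ)^{-1} e_j for every m. -/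

import Mathlib

open Matrix

/-- Single-stage product formula for the individual mediation effect of mediator `j`
in the linear SEM: `μ(a) = α + a • δ` is the mean mediator vector, `W` the strictly
upper triangular weight matrix, `F a` the mean outcome intervening on the treatment
alone, `G a m` the mean outcome additionally setting mediator `j` to `m`, with `z a m`
the induced shift of the other mediators.  The difference of slopes is
`δ j * κᵀ (I - Qⱼ Wᵀ)⁻¹ eⱼ`. -/
theorem stmt_0 (d : ℕ) (hd : 1 ≤ d)
    (W : Matrix (Fin d) (Fin d) ℝ)
    (hW : ∀ i k : Fin d, k ≤ i → W i k = 0)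
    (α δ κ : Fin d → ℝ) (α₂ δ₂ : ℝ) (j : Fin d)
    (e : Fin d → ℝ) (he : e = Pi.single j 1)
    (Q : Matrix (Fin d) (Fin d) ℝ) (hQ : Q = 1 - vecMulVec e e)
    (A : Matrix (Fin d) (Fin d) ℝ) (hA : A = 1 - Q * Wᵀ)
    (z : ℝ → ℝ → Fin d → ℝ)
    (hz : ∀ a m : ℝ, z a m = (m - (α j + a * δ j)) • (A⁻¹ *ᵥ e))
    (F : ℝ → ℝ) (hF : ∀ a : ℝ, F a = α₂ + δ₂ * a + κ ⬝ᵥ (α + a • δ))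
    (G : ℝ → ℝ → ℝ)
    (hG : ∀ a m : ℝ, G a m = α₂ + δ₂ * a + κ ⬝ᵥ (α + a • δ + z a m)) :
    -- (i) invertibility of I − Qⱼ Wᵀ
    IsUnit A ∧
    -- (ii) z a m is the unique solution of the constrained linear system
    (∀ a m : ℝ,
      ((z a m) j = m - (α j + a * δ j) ∧
        ∀ i : Fin d, i ≠ j → (z a m) i = (Wᵀ *ᵥ (z a m)) i) ∧
      (∀ w : Fin d → ℝ,
        (w j = m - (α j + a * δ j) ∧ ∀ i : Fin d, i ≠ j → w i = (Wᵀ *ᵥ w) i) →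
        w = z a m)) ∧
    -- (iii) affineness in a, and the slope difference is the product formula
    (∃ sF sG : ℝ,
      (∀ a : ℝ, F a = F 0 + sF * a) ∧
      (∀ m a : ℝ, G a m = G 0 m + sG * a) ∧
      sF - sG = δ j * (κ ⬝ᵥ (A⁻¹ *ᵥ e))) := by
  have hsum : ∀ u : Fin d → ℝ, e ⬝ᵥ u = u j := by
    intro u; rw [he, single_dotProduct, one_mul]
  -- Q acts by subtracting the j-th coordinate times e
  have hQact : ∀ w : Fin d → ℝ, Q *ᵥ w = w - (w j) • e := by
    intro w
    rw [hQ, sub_mulVec, one_mulVec]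
    congr 1
    funext i
    have h1 : (vecMulVec e e *ᵥ w) i = e i * (e ⬝ᵥ w) := by
      simp [mulVec, vecMulVec_apply, dotProduct, Finset.mul_sum, mul_assoc]
    rw [h1, hsum]
    simp [mul_comm]
  -- action of A
  have hAact : ∀ u : Fin d → ℝ,
      (A *ᵥ u) j = u j ∧ ∀ i : Fin d, i ≠ j → (A *ᵥ u) i = u i - (Wᵀ *ᵥ u) i := by
    intro u
    have h1 : A *ᵥ u = u - Q *ᵥ (Wᵀ *ᵥ u) := by
      rw [hA, sub_mulVec, one_mulVec, ← mulVec_mulVec]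
    rw [h1, hQact]
    constructor
    · simp [he]
    · intro i hi; simp [he, Pi.single_apply, hi]
  -- strict lower-triangularity of Q * Wᵀ
  have hN : ∀ i k : Fin d, i ≤ k → (Q * Wᵀ) i k = 0 := by
    intro i k hik
    have h1 : (Q * Wᵀ) i k = W k i - e i * W k j := by
      rw [hQ, Matrix.sub_mul, Matrix.one_mul]
      simp only [Matrix.sub_apply, transpose_apply, Matrix.mul_apply, vecMulVec_apply, mul_assoc]
      rw [← Finset.mul_sum]
      congr 1
      exact congrArg (e i * ·) (hsum fun l => W k l)
    rw [h1, hW k i hik]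
    rcases eq_or_ne i j with rfl | hij
    · rw [hW k i hik]; ring
    · rw [he]; simp [Pi.single_apply, hij]
  have hdet : A.det = 1 := by
    have htri : A.BlockTriangular OrderDual.toDual := by
      intro i k h
      have hik : i < k := h
      rw [hA]
      simp [one_apply, hik.ne, hN i k hik.le]
    rw [Matrix.det_of_lowerTriangular A htri, Finset.prod_eq_one]
    intro i _
    rw [hA]
    simp [hN i i le_rfl]
  have hdu : IsUnit A.det := by rw [hdet]; exact isUnit_one
  have hUnit : IsUnit A := by rw [Matrix.isUnit_iff_isUnit_det]; exact hdu
  have hAAinv : A * A⁻¹ = 1 := Matrix.mul_nonsing_inv A hdu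
  have hAinvA : A⁻¹ * A = 1 := Matrix.nonsing_inv_mul A hdu
  set v : Fin d → ℝ := A⁻¹ *ᵥ e with hv
  have hAv : A *ᵥ v = e := by rw [hv, mulVec_mulVec, hAAinv, one_mulVec]
  have hvj : v j = 1 := by
    have h := (hAact v).1
    rw [hAv, he] at h
    simpa using h.symm
  have hvi : ∀ i : Fin d, i ≠ j → v i = (Wᵀ *ᵥ v) i := by
    intro i hi
    have h := (hAact v).2 i hi
    rw [hAv, he] at h
    simp [Pi.single_apply, hi] at h
    linarith
  refine ⟨hUnit, ?_, ?_⟩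
  · intro a m
    set c : ℝ := m - (α j + a * δ j) with hc
    have hzj : (z a m) j = c := by rw [hz]; simp [hvj, hc]
    have hzi : ∀ i : Fin d, i ≠ j → (z a m) i = (Wᵀ *ᵥ (z a m)) i := by
      intro i hi
      rw [hz, mulVec_smul]
      simp only [Pi.smul_apply, smul_eq_mul]
      rw [hvi i hi]
    refine ⟨⟨hzj, hzi⟩, ?_⟩
    intro w ⟨hw1, hw2⟩
    have hAw : A *ᵥ w = A *ᵥ (z a m) := by
      have hAz : A *ᵥ (z a m) = c • e := by
        rw [hz, mulVec_smul, hAv, ← hc]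
      rw [hAz]
      funext i
      rcases eq_or_ne i j with rfl | hi
      · rw [(hAact w).1, hw1, he]; simp
      · rw [(hAact w).2 i hi, he]
        simp [Pi.single_apply, hi, ← hw2 i hi]
    have := congrArg (fun u => A⁻¹ *ᵥ u) hAw
    simpa [mulVec_mulVec, hAinvA] using this
  · refine ⟨δ₂ + κ ⬝ᵥ δ, δ₂ + κ ⬝ᵥ δ - δ j * (κ ⬝ᵥ v), ?_, ?_, by ring⟩
    · intro a
      simp only [hF, dotProduct_add, dotProduct_smul, smul_eq_mul]
      ring
    · intro m a
      simp only [hG, hz, dotProduct_add, dotProduct_smul, smul_eq_mul]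
      ring
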